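/- For every integer M > 3, twice the number of elements of the interior weight set L̃_M equals the number of elements of the interior honeycomb point set H̃_M, i.e. 2·|L̃_M| = |H̃_M|. -/

import Mathlib

open Finset

/-- The point set `F_{P,M}`: triples of nonnegative integers summing to `M`. -/
def FPM (M : ℕ) : Finset (ℕ × ℕ × ℕ) :=
  (Finset.range (M+1) ×ˢ Finset.range (M+1) ×ˢ Finset.range (M+1)).filter
    (fun s => s.1 + s.2.1 + s.2.2 = M)

/-- The point set `F_{Q,M}`: triples of `F_{P,M}` with `s1 + 2 s2 ≡ 0 (mod 3)`. -/
def FQM (M : ℕ) : Finset (ℕ × ℕ × ℕ) :=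
  (FPM M).filter (fun s => (s.2.1 + 2 * s.2.2) % 3 = 0)

/-- The honeycomb point set `H_M = F_{P,M} \ F_{Q,M}`. -/
def HM (M : ℕ) : Finset (ℕ × ℕ × ℕ) := FPM M \ FQM M

/-- The interior point set `F̃_{P,M}`: triples of strictly positive integers summing to `M`. -/
def FPMint (M : ℕ) : Finset (ℕ × ℕ × ℕ) :=
  (FPM M).filter (fun s => 0 < s.1 ∧ 0 < s.2.1 ∧ 0 < s.2.2)

/-- The interior point set `F̃_{Q,M}`. -/
def FQMint (M : ℕ) : Finset (ℕ × ℕ × ℕ) :=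
  (FPMint M).filter (fun s => (s.2.1 + 2 * s.2.2) % 3 = 0)

/-- The interior honeycomb point set `H̃_M = F̃_{P,M} \ F̃_{Q,M}`. -/
def HMint (M : ℕ) : Finset (ℕ × ℕ × ℕ) := FPMint M \ FQMint M

/-- The weight set `L_M ⊆ Λ_{Q,M}`. -/
def LM (M : ℕ) : Finset (ℕ × ℕ × ℕ) :=
  (FPM M).filter (fun l => (l.2.1 < l.1 ∧ l.2.2 < l.1) ∨ (l.1 = l.2.1 ∧ l.2.2 < l.1))

/-- The interior weight set `L̃_M`: elements of `L_M` with all coordinates positive. -/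
def LMint (M : ℕ) : Finset (ℕ × ℕ × ℕ) :=
  (LM M).filter (fun l => 0 < l.1 ∧ 0 < l.2.1 ∧ 0 < l.2.2)

/-- A triple `s ∈ F_{P,M}` is identified with the point `(s1/M, s2/M)`. -/
noncomputable def pt (M : ℕ) (s : ℕ × ℕ × ℕ) : ℝ × ℝ :=
  ((s.2.1 : ℝ) / M, (s.2.2 : ℝ) / M)

/-- The Weyl group orbit of the weight `λ` (ordered list, in `ω`-coordinates). -/
def orbit (l : ℕ × ℕ × ℕ) : List (ℤ × ℤ) :=
  [(2*(l.2.1:ℤ)+l.2.2, (l.2.1:ℤ)+2*l.2.2),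
   (-(l.2.1:ℤ)+l.2.2, (l.2.1:ℤ)+2*l.2.2),
   (-(l.2.1:ℤ)-2*l.2.2, (l.2.1:ℤ)-l.2.2),
   (-(l.2.1:ℤ)-2*l.2.2, -2*(l.2.1:ℤ)-l.2.2),
   (-(l.2.1:ℤ)+l.2.2, -2*(l.2.1:ℤ)-l.2.2),
   (2*(l.2.1:ℤ)+l.2.2, (l.2.1:ℤ)-l.2.2)]

/-- The signs `(+,−,+,−,+,−)` attached to the six orbit points for `S`-functions. -/
def orbitSigns : List ℤ := [1, -1, 1, -1, 1, -1]

/-- The Weyl orbit `C`-function `Φ_λ` of `A₂`. -/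
noncomputable def PhiC (l : ℕ × ℕ × ℕ) (x : ℝ × ℝ) : ℂ :=
  ((orbit l).map (fun p =>
    Complex.exp (2 * Real.pi * Complex.I / 3 * ((p.1 : ℂ) * (x.1 : ℂ) + (p.2 : ℂ) * (x.2 : ℂ))))).sum

/-- The Weyl orbit `S`-function `φ_λ` of `A₂`. -/
noncomputable def PhiS (l : ℕ × ℕ × ℕ) (x : ℝ × ℝ) : ℂ :=
  ((orbitSigns.zip (orbit l)).map (fun p => (p.1 : ℂ) *
    Complex.exp (2 * Real.pi * Complex.I / 3 * ((p.2.1 : ℂ) * (x.1 : ℂ) + (p.2.2 : ℂ) * (x.2 : ℂ))))).sum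

/-- The Hartley kernel `cas t = cos t + sin t`. -/
noncomputable def cas (t : ℝ) : ℝ := Real.cos t + Real.sin t

/-- The Hartley `C`-function `ζ¹_λ` of `A₂`. -/
noncomputable def zetaC (l : ℕ × ℕ × ℕ) (x : ℝ × ℝ) : ℝ :=
  ((orbit l).map (fun p => cas (2 * Real.pi / 3 * ((p.1 : ℝ) * x.1 + (p.2 : ℝ) * x.2)))).sum

/-- The Hartley `S`-function `ζ^e_λ` of `A₂`. -/
noncomputable def zetaS (l : ℕ × ℕ × ℕ) (x : ℝ × ℝ) : ℝ :=
  ((orbitSigns.zip (orbit l)).map (fun p => (p.1 : ℝ) *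
    cas (2 * Real.pi / 3 * ((p.2.1 : ℝ) * x.1 + (p.2.2 : ℝ) * x.2)))).sum

/-- The number of zero entries of a triple. -/
def zeroCount (s : ℕ × ℕ × ℕ) : ℕ :=
  (if s.1 = 0 then 1 else 0) + (if s.2.1 = 0 then 1 else 0) + (if s.2.2 = 0 then 1 else 0)

/-- The discrete function `ε`: values `6, 3, 1` for zero, one, two zero entries. -/
def epsF (s : ℕ × ℕ × ℕ) : ℕ :=
  if zeroCount s = 0 then 6 else if zeroCount s = 1 then 3 else 1

/-- The discrete function `h_M`: values `1, 2, 6` for zero, one, two zero entries. -/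
def hMF (l : ℕ × ℕ × ℕ) : ℕ :=
  if zeroCount l = 0 then 1 else if zeroCount l = 1 then 2 else 6

/-- The elements `γ₀ = id`, `γ₁`, `γ₂` of `Γ_M` acting as cyclic permutations of Kac
coordinates: `γ₁[λ0,λ1,λ2] = [λ2,λ0,λ1]`, `γ₂[λ0,λ1,λ2] = [λ1,λ2,λ0]`. -/
def gam (k : Fin 3) (l : ℕ × ℕ × ℕ) : ℕ × ℕ × ℕ :=
  if k = 0 then l else if k = 1 then (l.2.2, l.1, l.2.1) else (l.2.1, l.2.2, l.1)

/-- The normalization function `μ` of a triple of extension coefficients. -/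
noncomputable def muNorm (a b c : ℂ) : ℝ :=
  ‖a‖ ^ 2 + ‖b‖ ^ 2 + ‖c‖ ^ 2
    - (a * starRingEnd ℂ b + a * starRingEnd ℂ c + b * starRingEnd ℂ c).re

/-- The intertwining function `β` of two triples of extension coefficients. -/
noncomputable def betaFun (a b c a' b' c' : ℂ) : ℂ :=
  2 * (a * starRingEnd ℂ a' + b * starRingEnd ℂ b' + c * starRingEnd ℂ c')
    - a * (starRingEnd ℂ b' + starRingEnd ℂ c')
    - b * (starRingEnd ℂ a' + starRingEnd ℂ c')
    - c * (starRingEnd ℂ a' + starRingEnd ℂ b')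

/-- The extended `C`-function `Φ^t_λ` with extension coefficients `μ0, μ1, μ2`. -/
noncomputable def PhiCExt (μ0 μ1 μ2 : ℂ) (l : ℕ × ℕ × ℕ) (x : ℝ × ℝ) : ℂ :=
  μ0 * PhiC l x + μ1 * PhiC (gam 1 l) x + μ2 * PhiC (gam 2 l) x

/-- The extended `S`-function `φ^t_λ` with extension coefficients `μ0, μ1, μ2`. -/
noncomputable def PhiSExt (μ0 μ1 μ2 : ℂ) (l : ℕ × ℕ × ℕ) (x : ℝ × ℝ) : ℂ :=
  μ0 * PhiS l x + μ1 * PhiS (gam 1 l) x + μ2 * PhiS (gam 2 l) x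

/-- The extended Hartley `C`-function `ζ^{1,t}_λ` with extension coefficients `μ0, μ1, μ2`. -/
noncomputable def zetaCExt (μ0 μ1 μ2 : ℂ) (l : ℕ × ℕ × ℕ) (x : ℝ × ℝ) : ℂ :=
  μ0 * (zetaC l x : ℂ) + μ1 * (zetaC (gam 1 l) x : ℂ) + μ2 * (zetaC (gam 2 l) x : ℂ)

/-- The extended Hartley `S`-function `ζ^{e,t}_λ` with extension coefficients `μ0, μ1, μ2`. -/
noncomputable def zetaSExt (μ0 μ1 μ2 : ℂ) (l : ℕ × ℕ × ℕ) (x : ℝ × ℝ) : ℂ :=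
  μ0 * (zetaS l x : ℂ) + μ1 * (zetaS (gam 1 l) x : ℂ) + μ2 * (zetaS (gam 2 l) x : ℂ)

/-- `2·|L̃_M| = |H̃_M|` for the interior weight and honeycomb point sets. -/
lemma mem_LMint_iff {M : ℕ} {s : ℕ × ℕ × ℕ} :
    s ∈ LMint M ↔ s.1 + s.2.1 + s.2.2 = M ∧
      ((s.2.1 < s.1 ∧ s.2.2 < s.1) ∨ (s.1 = s.2.1 ∧ s.2.2 < s.1)) ∧
      0 < s.1 ∧ 0 < s.2.1 ∧ 0 < s.2.2 := by
  simp only [LMint, LM, FPM, Finset.mem_filter, Finset.mem_product, Finset.mem_range]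
  omega

lemma mem_HMint_iff {M : ℕ} {s : ℕ × ℕ × ℕ} :
    s ∈ HMint M ↔ s.1 + s.2.1 + s.2.2 = M ∧
      0 < s.1 ∧ 0 < s.2.1 ∧ 0 < s.2.2 ∧ ¬ (s.2.1 + 2 * s.2.2) % 3 = 0 := by
  simp only [HMint, FQMint, FPMint, FPM, Finset.mem_sdiff, Finset.mem_filter,
    Finset.mem_product, Finset.mem_range]
  omega

lemma card_range_filter_mod3 (r n : ℕ) :
    ((Finset.range n).filter (fun j => (j + r) % 3 = 0)).card
      = (n + 2 - (3 - r % 3) % 3) / 3 := by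
  induction n with
  | zero =>
    simp only [Finset.range_zero, Finset.filter_empty, Finset.card_empty]
    omega
  | succ n ih =>
    rw [Finset.range_add_one, Finset.filter_insert]
    split_ifs with h
    · rw [Finset.card_insert_of_notMem (by simp)]
      omega
    · omega

lemma boundary_L (M : ℕ) (hM : 4 ≤ M) :
    ((LMint M).filter (fun s => s.1 = 1 ∨ s.2.1 = 1 ∨ s.2.2 = 1)).card = M - 3 := by
  have hset : (LMint M).filter (fun s => s.1 = 1 ∨ s.2.1 = 1 ∨ s.2.2 = 1)
      = (Finset.range ((M-1)/2)).image (fun j => (M-2-j, j+1, 1))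
        ∪ (Finset.range ((M-4)/2)).image (fun j => (M-3-j, 1, j+2)) := by
    ext ⟨a, b, c⟩
    simp only [Finset.mem_filter, mem_LMint_iff, Finset.mem_union, Finset.mem_image,
      Finset.mem_range, Prod.mk.injEq]
    constructor
    · rintro ⟨⟨hsum, hdom, ha, hb, hc⟩, hbd⟩
      by_cases hc1 : c = 1
      · exact Or.inl ⟨b - 1, by omega, by omega, by omega, by omega⟩
      · exact Or.inr ⟨c - 2, by omega, by omega, by omega, by omega⟩
    · rintro (⟨j, hj, h1, h2, h3⟩ | ⟨j, hj, h1, h2, h3⟩) <;>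
        exact ⟨⟨by omega, by omega, by omega, by omega, by omega⟩, by omega⟩
  rw [hset, Finset.card_union_of_disjoint, Finset.card_image_of_injOn,
    Finset.card_image_of_injOn, Finset.card_range, Finset.card_range]
  · omega
  · intro x _ y _ h
    simp only [Prod.mk.injEq] at h
    omega
  · intro x _ y _ h
    simp only [Prod.mk.injEq] at h
    omega
  · simp only [Finset.disjoint_left, Finset.mem_image, Finset.mem_range]
    rintro x ⟨j, hj, rfl⟩ ⟨k, hk, hx⟩
    simp only [Prod.mk.injEq] at hx
    omega

lemma boundary_H (M : ℕ) (hM : 4 ≤ M) :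
    ((HMint M).filter (fun s => s.1 = 1 ∨ s.2.1 = 1 ∨ s.2.2 = 1)).card = 2 * M - 6 := by
  have hset : (HMint M).filter (fun s => s.1 = 1 ∨ s.2.1 = 1 ∨ s.2.2 = 1)
      = ((Finset.range (M-2)).filter (fun j => ¬ (j + (M+3)) % 3 = 0)).image
          (fun j => (1, j+1, M-2-j))
        ∪ ((Finset.range (M-3)).filter (fun j => ¬ (j + 3) % 3 = 0)).image
          (fun j => (M-2-j, 1, j+1))
        ∪ ((Finset.range (M-4)).filter (fun j => ¬ (j + 1) % 3 = 0)).image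
          (fun j => (M-3-j, j+2, 1)) := by
    ext ⟨a, b, c⟩
    simp only [Finset.mem_filter, mem_HMint_iff, Finset.mem_union, Finset.mem_image,
      Finset.mem_range, Prod.mk.injEq]
    constructor
    · rintro ⟨⟨hsum, ha, hb, hc, hmod⟩, hbd⟩
      by_cases ha1 : a = 1
      · exact Or.inl (Or.inl ⟨b - 1, ⟨by omega, by omega⟩, by omega, by omega, by omega⟩)
      · by_cases hb1 : b = 1
        · exact Or.inl (Or.inr ⟨c - 1, ⟨by omega, by omega⟩, by omega, by omega, by omega⟩)
        · exact Or.inr ⟨b - 2, ⟨by omega, by omega⟩, by omega, by omega, by omega⟩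
    · rintro ((⟨j, ⟨hj, hm⟩, h1, h2, h3⟩ | ⟨j, ⟨hj, hm⟩, h1, h2, h3⟩) |
        ⟨j, ⟨hj, hm⟩, h1, h2, h3⟩) <;>
        exact ⟨⟨by omega, by omega, by omega, by omega, by omega⟩, by omega⟩
  rw [hset, Finset.card_union_of_disjoint, Finset.card_union_of_disjoint,
    Finset.card_image_of_injOn, Finset.card_image_of_injOn, Finset.card_image_of_injOn]
  · have e0 := Finset.card_filter_add_card_filter_not
      (s := Finset.range (M-2)) (p := fun j => (j + (M+3)) % 3 = 0)
    have e1 := Finset.card_filter_add_card_filter_not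
      (s := Finset.range (M-3)) (p := fun j => (j + 3) % 3 = 0)
    have e2 := Finset.card_filter_add_card_filter_not
      (s := Finset.range (M-4)) (p := fun j => (j + 1) % 3 = 0)
    rw [card_range_filter_mod3, Finset.card_range] at e0 e1 e2
    omega
  · intro x _ y _ h
    simp only [Prod.mk.injEq] at h
    omega
  · intro x _ y _ h
    simp only [Prod.mk.injEq] at h
    omega
  · intro x _ y _ h
    simp only [Prod.mk.injEq] at h
    omega
  · simp only [Finset.disjoint_left, Finset.mem_image, Finset.mem_filter, Finset.mem_range]
    rintro x ⟨j, hj, rfl⟩ ⟨k, hk, hx⟩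
    simp only [Prod.mk.injEq] at hx
    omega
  · simp only [Finset.disjoint_left, Finset.mem_union, Finset.mem_image, Finset.mem_filter,
      Finset.mem_range]
    rintro x (⟨j, hj, rfl⟩ | ⟨j, hj, rfl⟩) ⟨k, hk, hx⟩ <;>
      · simp only [Prod.mk.injEq] at hx
        omega

lemma interior_L (M : ℕ) (hM : 7 ≤ M) :
    ((LMint M).filter (fun s => ¬ (s.1 = 1 ∨ s.2.1 = 1 ∨ s.2.2 = 1))).card
      = (LMint (M-3)).card := by
  apply Finset.card_nbij' (i := fun s => (s.1 - 1, s.2.1 - 1, s.2.2 - 1))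
    (j := fun s => (s.1 + 1, s.2.1 + 1, s.2.2 + 1))
  · rintro ⟨a, b, c⟩ ha
    simp only [Finset.mem_coe, Finset.mem_filter, mem_LMint_iff] at ha ⊢
    omega
  · rintro ⟨a, b, c⟩ ha
    simp only [Finset.mem_coe, Finset.mem_filter, mem_LMint_iff] at ha ⊢
    omega
  · rintro ⟨a, b, c⟩ ha
    simp only [Finset.mem_coe, Finset.mem_filter, mem_LMint_iff] at ha
    simp only [Prod.mk.injEq]
    omega
  · rintro ⟨a, b, c⟩ ha
    simp only [Finset.mem_coe, mem_LMint_iff] at ha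
    simp only [Prod.mk.injEq]
    omega

lemma interior_H (M : ℕ) (hM : 7 ≤ M) :
    ((HMint M).filter (fun s => ¬ (s.1 = 1 ∨ s.2.1 = 1 ∨ s.2.2 = 1))).card
      = (HMint (M-3)).card := by
  apply Finset.card_nbij' (i := fun s => (s.1 - 1, s.2.1 - 1, s.2.2 - 1))
    (j := fun s => (s.1 + 1, s.2.1 + 1, s.2.2 + 1))
  · rintro ⟨a, b, c⟩ ha
    simp only [Finset.mem_coe, Finset.mem_filter, mem_HMint_iff] at ha ⊢
    omega
  · rintro ⟨a, b, c⟩ ha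
    simp only [Finset.mem_coe, Finset.mem_filter, mem_HMint_iff] at ha ⊢
    omega
  · rintro ⟨a, b, c⟩ ha
    simp only [Finset.mem_coe, Finset.mem_filter, mem_HMint_iff] at ha
    simp only [Prod.mk.injEq]
    omega
  · rintro ⟨a, b, c⟩ ha
    simp only [Finset.mem_coe, mem_HMint_iff] at ha
    simp only [Prod.mk.injEq]
    omega

lemma card_LMint_aux : ∀ M : ℕ, 3 < M → 2 * (LMint M).card = (HMint M).card := by
  intro M
  induction M using Nat.strong_induction_on with
  | _ M ih =>
    intro hM
    rcases lt_or_ge M 7 with h7 | h7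
    · interval_cases M
      · decide
      · decide
      · decide
    · have ihm := ih (M - 3) (by omega) (by omega)
      have hL := Finset.card_filter_add_card_filter_not
        (s := LMint M) (p := fun s => s.1 = 1 ∨ s.2.1 = 1 ∨ s.2.2 = 1)
      have hH := Finset.card_filter_add_card_filter_not
        (s := HMint M) (p := fun s => s.1 = 1 ∨ s.2.1 = 1 ∨ s.2.2 = 1)
      rw [interior_L M h7] at hL
      rw [interior_H M h7] at hH
      rw [boundary_L M (by omega)] at hL
      rw [boundary_H M (by omega)] at hH
      omega

theorem card_LMint (M : ℕ) (hM : 3 < M) :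
    2 * (LMint M).card = (HMint M).card :=
  card_LMint_aux M hM
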